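/- Let η ∈ Z_K be nonzero and not a root of unity, and c_0(η) := max_{σ∈G} |η^σ| > 1. Fix a ℤ-basis (e_i)_{i=1,…,n} of Z_K, let (Γ_i^σ) be the inverse of the matrix (e_i^σ)_{i,σ}, and set Γ(K) := max_{i=1,…,n} ∑_{σ∈G} |Γ_i^σ|. Then Γ(K) ≥ 1, and for every prime p and every integer j with 1 ≤ j ≤ (log(p−1) − log(2·Γ(K)))/log(c_0(η)), the coordinates A_{j,i} ∈ ℤ of η^j = ∑_{i=1}^n A_{j,i}·e_i satisfy |A_{j,i}| < p/2 for all i; in particular the residue [η^j]_p of η^j coincides with η^j. -/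

import Mathlib

open NumberField

noncomputable section

/-- `x` is a `p`-integer of `K`, i.e. `x` lies in the localization `Z_{K,(p)}` of the
ring of integers of `K` away from `p` (denominators prime to `p`). -/
def IsPInt (K : Type*) [Field K] [NumberField K] (p : ℕ) (x : K) : Prop :=
  ∃ (a : 𝓞 K) (d : ℤ), ¬ (p : ℤ) ∣ d ∧ (d : K) * x = (a : K)

/-- `x ∈ I · Z_{K,(p)}`, for an ideal `I` of the ring of integers of `K`. -/
def MemPIdeal (K : Type*) [Field K] [NumberField K] (p : ℕ) (I : Ideal (𝓞 K)) (x : K) : Prop :=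
  ∃ (a : 𝓞 K) (d : ℤ), ¬ (p : ℤ) ∣ d ∧ a ∈ I ∧ (d : K) * x = (a : K)

/-- `x ∈ K^×` is prime to `p` : it is a unit at every place of `K` above `p`. -/
def PrimeToP (K : Type*) [Field K] [NumberField K] (p : ℕ) (x : K) : Prop :=
  IsPInt K p x ∧ IsPInt K p x⁻¹

/-- the prime `p` is unramified in `K`. -/
def UnramifiedIn (K : Type*) [Field K] [NumberField K] (p : ℕ) : Prop :=
  ∀ P : Ideal (𝓞 K), P.IsPrime → (p : 𝓞 K) ∈ P →
    Ideal.ramificationIdx' (Ideal.span {(p : ℤ)}) P = 1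

/-- `np` is the common residue degree of the primes of `K` above `p`. -/
def ResidueDeg (K : Type*) [Field K] [NumberField K] (p np : ℕ) : Prop :=
  ∀ P : Ideal (𝓞 K), P.IsPrime → (p : 𝓞 K) ∈ P →
    Ideal.inertiaDeg' (Ideal.span {(p : ℤ)}) P = np

/-- a rational number is a `p`-integer, i.e. lies in `ℤ_(p)`. -/
def RatIsPInt (p : ℕ) (q : ℚ) : Prop :=
  ∃ a d : ℤ, ¬ (p : ℤ) ∣ d ∧ (d : ℚ) * q = (a : ℚ)

/-- the generalized Fermat quotient `α_p(x) = (x^{p^{n_p}-1} - 1)/p`. -/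
def alphaP (K : Type*) [Field K] [NumberField K] (p np : ℕ) (x : K) : K :=
  (x ^ (p ^ np - 1) - 1) / p

/-- `c₀(η) = max_{σ∈G} |η^σ|` under a fixed embedding `ι : K → ℂ`. -/
def houseC (K : Type*) [Field K] [NumberField K] (ι : K →+* ℂ) (x : K) : ℝ :=
  ⨆ σ : K ≃ₐ[ℚ] K, ‖ι (σ x)‖

/-- `Γ(K) := max_i ∑_σ |Γ_i^σ|`, for the inverse matrix `(Γ_i^σ)` of `(e_i^σ)_{i,σ}`. -/
def GammaK (K : Type*) [Field K] [NumberField K] (I : Type*) [Fintype I]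
    (Γm : Matrix (K ≃ₐ[ℚ] K) I ℂ) : ℝ :=
  ⨆ i : I, ∑ σ : K ≃ₐ[ℚ] K, ‖Γm σ i‖

section MyAux

variable {K : Type*} [Field K] [NumberField K]

lemma myAux_le_houseC (ιC : K →+* ℂ) (x : K) (σ : K ≃ₐ[ℚ] K) :
    ‖ιC (σ x)‖ ≤ houseC K ιC x := by
  exact le_ciSup (f := fun σ : K ≃ₐ[ℚ] K => ‖ιC (σ x)‖)
    (Set.Finite.bddAbove (Set.finite_range _)) σ

lemma myAux_le_gammaK {I : Type*} [Fintype I] (Γm : Matrix (K ≃ₐ[ℚ] K) I ℂ) (i : I) :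
    ∑ σ : K ≃ₐ[ℚ] K, ‖Γm σ i‖ ≤ GammaK K I Γm := by
  exact le_ciSup (f := fun i : I => ∑ σ : K ≃ₐ[ℚ] K, ‖Γm σ i‖)
    (Set.Finite.bddAbove (Set.finite_range _)) i

lemma myAux_repr (ιC : K →+* ℂ) {I : Type*} [Fintype I] [DecidableEq I]
    (b : Module.Basis I ℤ (𝓞 K)) (Γm : Matrix (K ≃ₐ[ℚ] K) I ℂ)
    (hΓ1 : (Matrix.of fun (i : I) (σ : K ≃ₐ[ℚ] K) => ιC (σ ((b i : K)))) * Γm = 1)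
    (x : 𝓞 K) (i : I) :
    ((b.repr x i : ℤ) : ℂ) = ∑ σ : K ≃ₐ[ℚ] K, ιC (σ (x : K)) * Γm σ i := by
  classical
  have key : ∀ σ : K ≃ₐ[ℚ] K,
      ∑ i, ((b.repr x i : ℤ) : ℂ) * ιC (σ ((b i : K))) = ιC (σ (x : K)) := by
    intro σ
    set f : 𝓞 K →+* ℂ := ιC.comp (σ.toAlgHom.toRingHom.comp (algebraMap (𝓞 K) K)) with hf
    have h0 : ∑ i, b.repr x i • b i = x := b.sum_repr x
    have h1 : f (∑ i, b.repr x i • b i) = f x := by rw [h0]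
    rw [map_sum] at h1
    have h2 : ∀ i, f (b.repr x i • b i) = ((b.repr x i : ℤ) : ℂ) * ιC (σ ((b i : K))) := by
      intro i
      rw [map_zsmul, zsmul_eq_mul]
      rfl
    rw [Finset.sum_congr rfl fun i _ => h2 i] at h1
    exact h1
  have hAE : Matrix.vecMul (fun i => ((b.repr x i : ℤ) : ℂ))
      (Matrix.of fun (i : I) (σ : K ≃ₐ[ℚ] K) => ιC (σ ((b i : K))))
      = fun σ => ιC (σ (x : K)) := by
    funext σ
    simpa [Matrix.vecMul, dotProduct] using key σ
  have hAv : (fun i => ((b.repr x i : ℤ) : ℂ))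
      = Matrix.vecMul (fun σ => ιC (σ (x : K))) Γm := by
    rw [← hAE, Matrix.vecMul_vecMul, hΓ1, Matrix.vecMul_one]
  have := congrFun hAv i
  simpa [Matrix.vecMul, dotProduct] using this

end MyAux

/-- Lemma 6.5. Let `η ∈ Z_K` be nonzero, not a root of unity, and
`c₀(η) = max_σ |η^σ| > 1`. Fix a `ℤ`-basis `(e_i)` of `Z_K`, let `(Γ_i^σ)` be the inverse of
the matrix `(e_i^σ)_{i,σ}` and `Γ(K) := max_i ∑_σ |Γ_i^σ|`. Then `Γ(K) ≥ 1` and for every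
prime `p` and every `1 ≤ j ≤ (log(p−1) − log(2Γ(K)))/log(c₀(η))`, the integer coordinates
`A_{j,i}` of `η^j` on the basis satisfy `|A_{j,i}| < p/2` for all `i`; in particular the
residue `[η^j]_p` coincides with `η^j`. -/
theorem statement16 (K : Type*) [Field K] [NumberField K] [IsGalois ℚ K]
    [DecidableEq (K ≃ₐ[ℚ] K)]
    (ιC : K →+* ℂ) (I : Type*) [Fintype I] [DecidableEq I] (b : Module.Basis I ℤ (𝓞 K))
    (Γm : Matrix (K ≃ₐ[ℚ] K) I ℂ)
    (hΓ1 : (Matrix.of fun (i : I) (σ : K ≃ₐ[ℚ] K) => ιC (σ ((b i : K)))) * Γm = 1)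
    (hΓ2 : Γm * (Matrix.of fun (i : I) (σ : K ≃ₐ[ℚ] K) => ιC (σ ((b i : K)))) = 1)
    (η : 𝓞 K) (hη0 : η ≠ 0) (hnr : ¬ ∃ k : ℕ, 0 < k ∧ η ^ k = 1) :
    1 ≤ GammaK K I Γm ∧ 1 < houseC K ιC (η : K) ∧
    ∀ p : ℕ, p.Prime → ∀ j : ℕ, 1 ≤ j →
      (j : ℝ) ≤ (Real.log ((p : ℝ) - 1) - Real.log (2 * GammaK K I Γm)) /
        Real.log (houseC K ιC (η : K)) →
      ∀ i : I, |((b.repr (η ^ j) i : ℤ) : ℝ)| < (p : ℝ) / 2 := by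
    classical
  -- Part 1: Γ(K) ≥ 1
  have hΓge : 1 ≤ GammaK K I Γm := by
    obtain ⟨i, hi⟩ : ∃ i, b.repr (1 : 𝓞 K) i ≠ 0 := by
      by_contra h
      push_neg at h
      have h0 : b.repr (1 : 𝓞 K) = 0 := Finsupp.ext h
      exact one_ne_zero (b.repr.injective (show b.repr (1 : 𝓞 K) = b.repr 0 by
        rw [h0, map_zero]))
    have h1 : (1 : ℝ) ≤ |((b.repr (1 : 𝓞 K) i : ℤ) : ℝ)| := by
      exact_mod_cast Int.one_le_abs hi
    calc (1 : ℝ) ≤ |((b.repr (1 : 𝓞 K) i : ℤ) : ℝ)| := h1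
      _ = ‖((b.repr (1 : 𝓞 K) i : ℤ) : ℂ)‖ := (Complex.norm_intCast _).symm
      _ = ‖∑ σ : K ≃ₐ[ℚ] K, ιC (σ ((1 : 𝓞 K) : K)) * Γm σ i‖ := by
          rw [myAux_repr ιC b Γm hΓ1]
      _ = ‖∑ σ : K ≃ₐ[ℚ] K, Γm σ i‖ := by simp
      _ ≤ ∑ σ : K ≃ₐ[ℚ] K, ‖Γm σ i‖ := norm_sum_le _ _
      _ ≤ GammaK K I Γm := myAux_le_gammaK Γm i
  refine ⟨hΓge, ?_⟩
  -- every embedding comes from an automorphism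
  have hsurj : ∀ φ : K →+* ℂ, ∃ σ : K ≃ₐ[ℚ] K, ∀ y : K, φ y = ιC (σ y) := by
    set F : (K ≃ₐ[ℚ] K) → (K →+* ℂ) := fun σ => ιC.comp σ.toAlgHom.toRingHom with hF
    have hinj : Function.Injective F := by
      intro σ τ h
      apply AlgEquiv.ext
      intro y
      have := congrArg (fun g : K →+* ℂ => g y) h
      exact ιC.injective this
    have hbij : Function.Bijective F :=
      (Fintype.bijective_iff_injective_and_card F).mpr
        ⟨hinj, by rw [← Nat.card_eq_fintype_card, IsGalois.card_aut_eq_finrank, NumberField.Embeddings.card K ℂ]⟩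
    intro φ
    obtain ⟨σ, hσ⟩ := hbij.2 φ
    exact ⟨σ, fun y => by rw [← hσ]; rfl⟩
  have hηK : ((η : K)) ≠ 0 := by
    simpa using hη0
  -- Part 2: c₀(η) > 1
  have hhouse : 1 < houseC K ιC (η : K) := by
    by_contra hle
    push_neg at hle
    have hle' : ∀ σ : K ≃ₐ[ℚ] K, ‖ιC (σ (η : K))‖ ≤ 1 :=
      fun σ => (myAux_le_houseC ιC (η : K) σ).trans hle
    have hprod : (1 : ℝ) ≤ ∏ σ : K ≃ₐ[ℚ] K, ‖ιC (σ (η : K))‖ := by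
      have hN := Algebra.norm_eq_prod_automorphisms ℚ (η : K)
      have hN' := congrArg (fun z => ‖ιC z‖) hN
      simp only [map_prod, norm_prod] at hN'
      rw [← hN']
      have hq : ιC (algebraMap ℚ K (Algebra.norm ℚ (η : K)))
          = ((Algebra.norm ℤ η : ℤ) : ℂ) := by
        have h1 : ιC (algebraMap ℚ K (Algebra.norm ℚ (η : K)))
            = ((Algebra.norm ℚ (η : K) : ℚ) : ℂ) := eq_ratCast (ιC.comp (algebraMap ℚ K)) _
        rw [h1, ← Algebra.coe_norm_int]
        norm_cast
      rw [hq, Complex.norm_intCast]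
      have h2 : (1 : ℤ) ≤ |Algebra.norm ℤ η| :=
        Int.one_le_abs (Algebra.norm_ne_zero_iff.mpr hη0)
      exact_mod_cast h2
    have hall : ∀ σ : K ≃ₐ[ℚ] K, ‖ιC (σ (η : K))‖ = 1 := by
      intro σ₀
      refine le_antisymm (hle' σ₀) ?_
      have h2 : ∏ σ ∈ Finset.univ.erase σ₀, ‖ιC (σ (η : K))‖ ≤ 1 :=
        Finset.prod_le_one (fun _ _ => norm_nonneg _) (fun σ _ => hle' σ)
      have h3 := Finset.mul_prod_erase Finset.univ
        (fun σ : K ≃ₐ[ℚ] K => ‖ιC (σ (η : K))‖) (Finset.mem_univ σ₀)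
      calc (1 : ℝ) ≤ ∏ σ : K ≃ₐ[ℚ] K, ‖ιC (σ (η : K))‖ := hprod
        _ = ‖ιC (σ₀ (η : K))‖ *
            ∏ σ ∈ Finset.univ.erase σ₀, ‖ιC (σ (η : K))‖ := h3.symm
        _ ≤ ‖ιC (σ₀ (η : K))‖ * 1 :=
            mul_le_mul_of_nonneg_left h2 (norm_nonneg _)
        _ = ‖ιC (σ₀ (η : K))‖ := mul_one _
    have hallφ : ∀ φ : K →+* ℂ, ‖φ (η : K)‖ = 1 := by
      intro φ
      obtain ⟨σ, hσ⟩ := hsurj φ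
      rw [hσ]
      exact hall σ
    obtain ⟨k, hk, hk1⟩ := NumberField.Embeddings.pow_eq_one_of_norm_eq_one K ℂ
      (NumberField.RingOfIntegers.isIntegral_coe η) hallφ
    refine hnr ⟨k, hk, ?_⟩
    apply NumberField.RingOfIntegers.coe_injective
    push_cast
    exact hk1
  refine ⟨hhouse, ?_⟩
  -- Part 3
  intro p hp j hj hjle i
  set c : ℝ := houseC K ιC (η : K) with hc
  set Γ : ℝ := GammaK K I Γm with hΓ
  have hlogc : 0 < Real.log c := Real.log_pos hhouse
  have hp2 : (2 : ℝ) ≤ (p : ℝ) := by exact_mod_cast hp.two_le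
  have hp1 : (1 : ℝ) ≤ (p : ℝ) - 1 := by linarith
  have hΓpos : (0 : ℝ) < 2 * Γ := by linarith
  have hj' : (j : ℝ) * Real.log c ≤ Real.log ((p : ℝ) - 1) - Real.log (2 * Γ) :=
    (le_div_iff₀ hlogc).mp hjle
  have hcj : c ^ j ≤ ((p : ℝ) - 1) / (2 * Γ) := by
    have hlog : Real.log (c ^ j) ≤ Real.log (((p : ℝ) - 1) / (2 * Γ)) := by
      rw [Real.log_pow, Real.log_div (by linarith) (ne_of_gt hΓpos)]
      exact_mod_cast hj'
    exact (Real.log_le_log_iff (pow_pos (by linarith) j)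
      (div_pos (by linarith) hΓpos)).mp hlog
  have habs : |((b.repr (η ^ j) i : ℤ) : ℝ)| ≤ c ^ j * Γ := by
    calc |((b.repr (η ^ j) i : ℤ) : ℝ)|
        = ‖((b.repr (η ^ j) i : ℤ) : ℂ)‖ := (Complex.norm_intCast _).symm
      _ = ‖∑ σ : K ≃ₐ[ℚ] K, ιC (σ ((η ^ j : 𝓞 K) : K)) * Γm σ i‖ := by
          rw [myAux_repr ιC b Γm hΓ1]
      _ ≤ ∑ σ : K ≃ₐ[ℚ] K, ‖ιC (σ ((η ^ j : 𝓞 K) : K)) * Γm σ i‖ :=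
          norm_sum_le _ _
      _ ≤ ∑ σ : K ≃ₐ[ℚ] K, c ^ j * ‖Γm σ i‖ := by
          refine Finset.sum_le_sum fun σ _ => ?_
          rw [norm_mul]
          refine mul_le_mul_of_nonneg_right ?_ (norm_nonneg _)
          have : ‖ιC (σ ((η ^ j : 𝓞 K) : K))‖
              = ‖ιC (σ (η : K))‖ ^ j := by
            push_cast
            rw [map_pow, map_pow, norm_pow]
          rw [this]
          exact pow_le_pow_left₀ (norm_nonneg _)
            (myAux_le_houseC ιC (η : K) σ) j
      _ = c ^ j * ∑ σ : K ≃ₐ[ℚ] K, ‖Γm σ i‖ := by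
          rw [Finset.mul_sum]
      _ ≤ c ^ j * Γ := mul_le_mul_of_nonneg_left (myAux_le_gammaK Γm i)
          (pow_nonneg (by linarith) j)
  have hfin : c ^ j * Γ ≤ ((p : ℝ) - 1) / 2 := by
    have h1 : c ^ j * Γ ≤ (((p : ℝ) - 1) / (2 * Γ)) * Γ :=
      mul_le_mul_of_nonneg_right hcj (by linarith)
    have hΓne : Γ ≠ 0 := by linarith
    have h2 : (((p : ℝ) - 1) / (2 * Γ)) * Γ = ((p : ℝ) - 1) / 2 := by
      field_simp
    linarith
  calc |((b.repr (η ^ j) i : ℤ) : ℝ)| ≤ c ^ j * Γ := habs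
    _ ≤ ((p : ℝ) - 1) / 2 := hfin
    _ < (p : ℝ) / 2 := by linarith
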